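/- Let q be the quadratic polynomial minimizing ∫ |q - f|² Γ_{μ₀,σ₀} dx over all polynomials of degree at most 2. Then ∇F(μ₀, σ₀) = ∇F^q(μ₀, σ₀), where F and F^q are the relaxed functionals of f and q respectively. -/

import Mathlib

open Real MeasureTheory Filter Topology

noncomputable def gauss (μ σ x : ℝ) : ℝ :=
  Real.exp (-(x - μ)^2 / (2 * σ^2)) / (Real.sqrt (2 * Real.pi) * σ)

noncomputable def relaxF (f : ℝ → ℝ) (μ σ : ℝ) : ℝ := ∫ x : ℝ, f x * gauss μ σ x

def PolyGrowth (f : ℝ → ℝ) : Prop :=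
  ∃ m : ℝ, 0 < m ∧ Tendsto (fun x : ℝ => f x / |x| ^ m) (cocompact ℝ) (𝓝 0)

lemma abs_pow_exp (b : ℝ) (n : ℕ) :
    (fun x : ℝ => |x|^n * Real.exp (-b*x^2)) = fun x => |x^n * Real.exp (-b*x^2)| := by
  funext x; rw [abs_mul, abs_pow, abs_of_pos (Real.exp_pos _)]

lemma integrable_one_add_abs_pow_gauss (n : ℕ) (b μ : ℝ) (hb : 0 < b) :
    Integrable fun x : ℝ => (1 + |x|)^n * Real.exp (-b * (x - μ)^2) := by
  have hmeas : AEStronglyMeasurable (fun x : ℝ => (1 + |x|)^n * Real.exp (-b * (x - μ)^2)) volume := by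
    apply Continuous.aestronglyMeasurable; fun_prop
  rw [← (measurePreserving_add_right (volume : Measure ℝ) μ).integrable_comp hmeas]
  simp only [Function.comp_def]
  have key : Integrable fun x : ℝ =>
      (1+|μ|)^n * (2^n * (Real.exp (-b*x^2) + |x|^n * Real.exp (-b*x^2))) := by
    refine (Integrable.const_mul (Integrable.const_mul ?_ _) _)
    refine (integrable_exp_neg_mul_sq hb).add ?_
    rw [abs_pow_exp]
    have hpow : Integrable (fun x : ℝ => x^n * Real.exp (-b*x^2)) := by
      have hn : (-1:ℝ) < (n:ℝ) := by exact_mod_cast neg_one_lt_zero.trans_le (Nat.cast_nonneg n)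
      simpa [Real.rpow_natCast] using integrable_rpow_mul_exp_neg_mul_sq hb hn
    exact hpow.abs
  refine key.mono' ?_ (ae_of_all _ fun x => ?_)
  · apply Continuous.aestronglyMeasurable; fun_prop
  · have h0 : (0:ℝ) ≤ Real.exp (-b*x^2) := (Real.exp_pos _).le
    have h1 : (0:ℝ) ≤ (1 + |x + μ|)^n := by positivity
    rw [Real.norm_eq_abs, add_sub_cancel_right, abs_mul,
      abs_of_nonneg h1, abs_of_nonneg h0]
    have h2 : (1 + |x + μ|)^n ≤ (1+|μ|)^n * (2^n * (1 + |x|^n)) := by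
      have e1 : 1 + |x + μ| ≤ (1+|μ|) * 2 * max 1 |x| := by
        have := abs_add_le x μ
        have h3 : (1:ℝ) ≤ max 1 |x| := le_max_left _ _
        have h4 : |x| ≤ max 1 |x| := le_max_right _ _
        nlinarith [abs_nonneg x, abs_nonneg μ]
      calc (1 + |x + μ|)^n ≤ ((1+|μ|) * 2 * max 1 |x|)^n :=
            pow_le_pow_left₀ (by positivity) e1 n
        _ ≤ ((1+|μ|) * 2)^n * (1 + |x|^n) := by
            rw [mul_pow]
            have : (max 1 |x|)^n ≤ 1 + |x|^n := by
              rcases le_total |x| 1 with h | h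
              · rw [max_eq_left h, one_pow]
                nlinarith [pow_nonneg (abs_nonneg x) n]
              · rw [max_eq_right h]
                nlinarith [pow_nonneg (abs_nonneg x) n]
            have hp : (0:ℝ) ≤ ((1+|μ|)*2)^n := by positivity
            exact mul_le_mul_of_nonneg_left this hp
        _ = (1+|μ|)^n * (2^n * (1 + |x|^n)) := by rw [mul_pow]; ring
    calc (1 + |x + μ|)^n * Real.exp (-b*x^2)
        ≤ ((1+|μ|)^n * (2^n * (1 + |x|^n))) * Real.exp (-b*x^2) :=
          mul_le_mul_of_nonneg_right h2 h0
      _ = (1+|μ|)^n * (2^n * (Real.exp (-b*x^2) + |x|^n * Real.exp (-b*x^2))) := by ring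


lemma gauss_nonneg {μ σ x : ℝ} (hσ : 0 < σ) : 0 ≤ gauss μ σ x := by
  unfold gauss
  have : 0 < Real.sqrt (2 * Real.pi) := Real.sqrt_pos.mpr (by positivity)
  positivity

lemma gauss_continuous (μ σ : ℝ) : Continuous (gauss μ σ) := by
  unfold gauss; fun_prop

lemma hasDerivAt_gauss_mu (σ x : ℝ) (hσ : σ ≠ 0) (m : ℝ) :
    HasDerivAt (fun m => gauss m σ x) (((x - m)/σ^2) * gauss m σ x) m := by
  have hu : HasDerivAt (fun m : ℝ => -(x - m)^2 / (2*σ^2)) ((x - m)/σ^2) m := by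
    have h1 : HasDerivAt (fun m : ℝ => (x - m)) (-1) m := by
      simpa using ((hasDerivAt_id m).const_sub x)
    have h2 := (h1.pow 2).neg.div_const (2*σ^2)
    refine h2.congr_deriv ?_
    field_simp; ring
  have h3 := (hu.exp).div_const (Real.sqrt (2*Real.pi) * σ)
  refine h3.congr_deriv ?_
  unfold gauss; ring

lemma hasDerivAt_gauss_sigma (μ x s : ℝ) (hs : s ≠ 0) :
    HasDerivAt (fun s => gauss μ s x) (((x - μ)^2/s^3 - 1/s) * gauss μ s x) s := by
  have hpi : Real.sqrt (2*Real.pi) ≠ 0 := by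
    have : 0 < Real.sqrt (2*Real.pi) := Real.sqrt_pos.mpr (by positivity)
    exact this.ne'
  have hsq : HasDerivAt (fun s : ℝ => 2 * s^2) (2*(2*s^1)) s :=
    ((hasDerivAt_pow 2 s).const_mul 2)
  have h2s : 2 * s^2 ≠ 0 := by positivity
  have hu : HasDerivAt (fun s : ℝ => -(x-μ)^2 / (2*s^2))
      ((0 * (2*s^2) - (-(x-μ)^2) * (2*(2*s^1))) / (2*s^2)^2) s :=
    (hasDerivAt_const s (-(x-μ)^2)).div hsq h2s
  have hv : HasDerivAt (fun s : ℝ => Real.sqrt (2*Real.pi) * s) (Real.sqrt (2*Real.pi) * 1) s :=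
    (hasDerivAt_id s).const_mul _
  have hvne : Real.sqrt (2*Real.pi) * s ≠ 0 := mul_ne_zero hpi hs
  have h := (hu.exp).div hv hvne
  refine h.congr_deriv ?_
  unfold gauss
  field_simp
  ring



lemma polyGrowth_bound (f : ℝ → ℝ) (hf : Continuous f) (hg : PolyGrowth f) :
    ∃ C : ℝ, ∃ n : ℕ, 0 ≤ C ∧ ∀ x, |f x| ≤ C * (1+|x|)^n := by
  obtain ⟨m, hm, ht⟩ := hg
  set n := ⌈m⌉₊ with hn
  have h1 : ∀ᶠ x in cocompact ℝ, dist (f x / |x| ^ m) 0 < 1 :=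
    Metric.tendsto_nhds.mp ht 1 one_pos
  rw [cocompact_eq_atBot_atTop, eventually_sup] at h1
  obtain ⟨hbot, htop⟩ := h1
  obtain ⟨A, hA⟩ := eventually_atTop.mp htop
  obtain ⟨B, hB⟩ := eventually_atBot.mp hbot
  set R : ℝ := max 1 (max A (-B)) with hR
  have hR1 : (1:ℝ) ≤ R := le_max_left _ _
  -- bound outside
  have hout : ∀ x : ℝ, R ≤ |x| → |f x| ≤ (1+|x|)^n := by
    intro x hx
    have h1x : (1:ℝ) ≤ |x| := hR1.trans hx
    have hdist : dist (f x / |x| ^ m) 0 < 1 := by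
      rcases le_total 0 x with h | h
      · apply hA
        rw [abs_of_nonneg h] at hx
        exact le_trans (le_trans (le_max_left A (-B)) (le_max_right _ _)) hx
      · apply hB
        rw [abs_of_nonpos h] at hx
        have : -B ≤ -x := le_trans (le_trans (le_max_right A (-B)) (le_max_right _ _)) hx
        linarith
    rw [Real.dist_0_eq_abs, abs_div, abs_of_nonneg (Real.rpow_nonneg (abs_nonneg x) m),
      div_lt_one (Real.rpow_pos_of_pos (lt_of_lt_of_le one_pos h1x) m)] at hdist
    have h2 : |x| ^ m ≤ |x| ^ (n:ℝ) :=
      Real.rpow_le_rpow_of_exponent_le h1x (Nat.le_ceil m)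
    rw [Real.rpow_natCast] at h2
    have h3 : |x|^n ≤ (1+|x|)^n :=
      pow_le_pow_left₀ (abs_nonneg x) (by linarith) n
    linarith
  obtain ⟨C₀, hC₀⟩ := (isCompact_Icc (a := -R) (b := R)).exists_bound_of_continuousOn
    hf.continuousOn
  refine ⟨max C₀ 1, n, le_trans zero_le_one (le_max_right _ _), fun x => ?_⟩
  have hC1 : (1:ℝ) ≤ max C₀ 1 := le_max_right _ _
  have hpow1 : (1:ℝ) ≤ (1+|x|)^n := one_le_pow₀ (by simp [abs_nonneg])
  rcases le_total |x| R with h | h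
  · have := hC₀ x (by constructor <;> [linarith [neg_abs_le x]; linarith [le_abs_self x]])
    rw [Real.norm_eq_abs] at this
    calc |f x| ≤ C₀ := this
      _ ≤ max C₀ 1 := le_max_left _ _
      _ ≤ max C₀ 1 * (1+|x|)^n := le_mul_of_one_le_right (by linarith) hpow1
  · calc |f x| ≤ (1+|x|)^n := hout x h
      _ ≤ max C₀ 1 * (1+|x|)^n := le_mul_of_one_le_left (by positivity) hC1

lemma quad_bound (a b c : ℝ) :
    ∀ x : ℝ, |a + b * x + c * x ^ 2| ≤ (|a|+|b|+|c|+1) * (1+|x|)^2 := by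
  intro x
  have h1 : |a + b * x + c * x ^ 2| ≤ |a| + |b| * |x| + |c| * x^2 := by
    calc |a + b * x + c * x ^ 2| ≤ |a + b * x| + |c * x^2| := abs_add_le _ _
      _ ≤ |a| + |b * x| + |c * x^2| := by linarith [abs_add_le a (b*x)]
      _ = |a| + |b| * |x| + |c| * x^2 := by rw [abs_mul, abs_mul, abs_pow, sq_abs]
  have h2 : (1+|x|)^2 = 1 + 2*|x| + x^2 := by rw [add_sq, sq_abs]; ring
  nlinarith [abs_nonneg a, abs_nonneg b, abs_nonneg c, abs_nonneg x, sq_nonneg x,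
    mul_nonneg (abs_nonneg b) (abs_nonneg x), mul_nonneg (abs_nonneg c) (sq_nonneg x)]



lemma sqrt2pi_pos : 0 < Real.sqrt (2 * Real.pi) := Real.sqrt_pos.mpr (by positivity)

lemma integrable_poly_mul_gauss (g : ℝ → ℝ) (hgc : Continuous g) (C : ℝ) (n : ℕ)
    (hb : ∀ x, |g x| ≤ C * (1+|x|)^n) (μ σ : ℝ) (hσ : 0 < σ) :
    Integrable fun x => g x * gauss μ σ x := by
  have hint := (integrable_one_add_abs_pow_gauss n (1/(2*σ^2)) μ (by positivity)).const_mul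
    (C / (Real.sqrt (2*Real.pi) * σ))
  refine hint.mono' (hgc.mul (gauss_continuous μ σ)).aestronglyMeasurable
    (ae_of_all _ fun x => ?_)
  rw [Real.norm_eq_abs, abs_mul, abs_of_nonneg (gauss_nonneg hσ)]
  have e1 : gauss μ σ x = Real.exp (-(1/(2*σ^2)) * (x-μ)^2) / (Real.sqrt (2*Real.pi) * σ) := by
    unfold gauss; ring_nf
  rw [e1]
  have h1 : |g x| ≤ C * (1+|x|)^n := hb x
  have h2 : (0:ℝ) < Real.sqrt (2*Real.pi) * σ := by positivity
  have h3 : (0:ℝ) ≤ Real.exp (-(1/(2*σ^2)) * (x-μ)^2) := (Real.exp_pos _).le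
  calc |g x| * (Real.exp (-(1/(2*σ^2)) * (x-μ)^2) / (Real.sqrt (2*Real.pi) * σ))
      ≤ (C * (1+|x|)^n) * (Real.exp (-(1/(2*σ^2)) * (x-μ)^2) / (Real.sqrt (2*Real.pi) * σ)) := by
        apply mul_le_mul_of_nonneg_right h1 (by positivity)
    _ = C / (Real.sqrt (2*Real.pi) * σ) * ((1+|x|)^n * Real.exp (-(1/(2*σ^2)) * (x-μ)^2)) := by
        ring

lemma exp_shift_mu (σ x μ m : ℝ) (hσ : 0 < σ) (hm : |m - μ| ≤ 1) :
    Real.exp (-(x-m)^2/(2*σ^2)) ≤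
      Real.exp (1/(2*σ^2)) * Real.exp (-(1/(4*σ^2))*(x-μ)^2) := by
  rw [← Real.exp_add]
  apply Real.exp_le_exp.mpr
  rw [← sub_nonneg]
  have h2 : (m-μ)^2 ≤ 1 := by nlinarith [abs_le.mp hm]
  have e : 1/(2*σ^2) + -(1/(4*σ^2))*(x-μ)^2 - (-(x-m)^2/(2*σ^2))
      = (2 + 2*(x-m)^2 - (x-μ)^2) / (4*σ^2) := by field_simp; ring
  rw [e]
  apply div_nonneg _ (by positivity)
  nlinarith [sq_nonneg ((x-m) - (m-μ))]

lemma deriv_mu (g : ℝ → ℝ) (hgc : Continuous g) (C : ℝ) (n : ℕ)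
    (hb : ∀ x, |g x| ≤ C * (1+|x|)^n) (μ σ : ℝ) (hσ : 0 < σ) :
    Integrable (fun x => g x * (((x - μ)/σ^2) * gauss μ σ x)) ∧
    HasDerivAt (fun m => ∫ x : ℝ, g x * gauss m σ x)
      (∫ x : ℝ, g x * (((x - μ)/σ^2) * gauss μ σ x)) μ := by
  have hC : 0 ≤ C := by
    have := (abs_nonneg (g 0)).trans (hb 0)
    simpa using this
  set K : ℝ := C * (1+|μ|) / σ^2 * Real.exp (1/(2*σ^2)) / (Real.sqrt (2*Real.pi) * σ) with hK
  have hKpos : 0 ≤ K := by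
    have := sqrt2pi_pos
    positivity
  have hF_meas : ∀ᶠ m in 𝓝 μ, AEStronglyMeasurable (fun x => g x * gauss m σ x)
      (volume : Measure ℝ) :=
    Eventually.of_forall fun m => (hgc.mul (gauss_continuous m σ)).aestronglyMeasurable
  have hF_int : Integrable (fun x => g x * gauss μ σ x) :=
    integrable_poly_mul_gauss g hgc C n hb μ σ hσ
  have hF'_meas : AEStronglyMeasurable (fun x => g x * (((x - μ)/σ^2) * gauss μ σ x))
      (volume : Measure ℝ) :=
    (hgc.mul (((continuous_id.sub continuous_const).div_const _).mul
      (gauss_continuous μ σ))).aestronglyMeasurable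
  have hbound_int : Integrable
      (fun x => K * ((1+|x|)^(n+1) * Real.exp (-(1/(4*σ^2)) * (x-μ)^2))) :=
    (integrable_one_add_abs_pow_gauss (n+1) (1/(4*σ^2)) μ (by positivity)).const_mul K
  have h_bound : ∀ᵐ x : ℝ, ∀ m ∈ Metric.ball μ 1,
      ‖g x * (((x - m)/σ^2) * gauss m σ x)‖ ≤
        K * ((1+|x|)^(n+1) * Real.exp (-(1/(4*σ^2)) * (x-μ)^2)) := by
    refine ae_of_all _ fun x m hm => ?_
    have hm1 : |m - μ| ≤ 1 := le_of_lt (by simpa [Real.dist_eq] using hm)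
    have hxb : |x - m| ≤ (1+|μ|) * (1+|x|) := by
      have h3 : |x - m| ≤ |x - μ| + |μ - m| := abs_sub_le x μ m
      have h4 : |x - μ| ≤ |x| + |μ| := abs_sub x μ
      have h5 : |μ - m| = |m - μ| := abs_sub_comm μ m
      nlinarith [abs_nonneg x, abs_nonneg μ]
    have hgauss : gauss m σ x ≤
        Real.exp (1/(2*σ^2)) * Real.exp (-(1/(4*σ^2))*(x-μ)^2) / (Real.sqrt (2*Real.pi) * σ) := by
      unfold gauss
      gcongr
      · exact exp_shift_mu σ x μ m hσ hm1
    rw [Real.norm_eq_abs, abs_mul, abs_mul, abs_div, abs_of_nonneg (gauss_nonneg hσ),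
      abs_of_pos (pow_pos hσ 2)]
    calc |g x| * (|x - m| / σ ^ 2 * gauss m σ x)
        ≤ (C*(1+|x|)^n) * (((1+|μ|)*(1+|x|))/σ^2 *
          (Real.exp (1/(2*σ^2)) * Real.exp (-(1/(4*σ^2))*(x-μ)^2) / (Real.sqrt (2*Real.pi)*σ))) := by
          apply mul_le_mul (hb x) ?_ (mul_nonneg (by positivity) (gauss_nonneg hσ))
            (mul_nonneg hC (by positivity))
          apply mul_le_mul ?_ hgauss (gauss_nonneg hσ) (by positivity)
          exact (div_le_div_iff_of_pos_right (pow_pos hσ 2)).mpr hxb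
      _ = K * ((1+|x|)^(n+1) * Real.exp (-(1/(4*σ^2)) * (x-μ)^2)) := by
          rw [hK]; ring
  have h_diff : ∀ᵐ x : ℝ, ∀ m ∈ Metric.ball μ 1,
      HasDerivAt (fun m => g x * gauss m σ x) (g x * (((x - m)/σ^2) * gauss m σ x)) m :=
    ae_of_all _ fun x m _ => (hasDerivAt_gauss_mu σ x hσ.ne' m).const_mul (g x)
  exact hasDerivAt_integral_of_dominated_loc_of_deriv_le (Metric.ball_mem_nhds μ one_pos) hF_meas hF_int hF'_meas
    h_bound hbound_int h_diff


lemma deriv_sigma (g : ℝ → ℝ) (hgc : Continuous g) (C : ℝ) (n : ℕ)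
    (hb : ∀ x, |g x| ≤ C * (1+|x|)^n) (μ σ : ℝ) (hσ : 0 < σ) :
    Integrable (fun x => g x * (((x - μ)^2/σ^3 - 1/σ) * gauss μ σ x)) ∧
    HasDerivAt (fun s => ∫ x : ℝ, g x * gauss μ s x)
      (∫ x : ℝ, g x * (((x - μ)^2/σ^3 - 1/σ) * gauss μ σ x)) σ := by
  have hC : 0 ≤ C := by
    have := (abs_nonneg (g 0)).trans (hb 0)
    simpa using this
  set K : ℝ := C * ((8/σ^3 + 2/σ) * (1+|μ|)^2) * (2/(Real.sqrt (2*Real.pi)*σ)) with hK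
  have hF_meas : ∀ᶠ s in 𝓝 σ, AEStronglyMeasurable (fun x => g x * gauss μ s x)
      (volume : Measure ℝ) :=
    Eventually.of_forall fun s => (hgc.mul (gauss_continuous μ s)).aestronglyMeasurable
  have hF_int : Integrable (fun x => g x * gauss μ σ x) :=
    integrable_poly_mul_gauss g hgc C n hb μ σ hσ
  have hF'_meas : AEStronglyMeasurable (fun x => g x * (((x - μ)^2/σ^3 - 1/σ) * gauss μ σ x))
      (volume : Measure ℝ) :=
    (hgc.mul (((((continuous_id.sub continuous_const).pow 2).div_const _).sub
      continuous_const).mul (gauss_continuous μ σ))).aestronglyMeasurable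
  have hbound_int : Integrable
      (fun x => K * ((1+|x|)^(n+2) * Real.exp (-(1/(5*σ^2)) * (x-μ)^2))) :=
    (integrable_one_add_abs_pow_gauss (n+2) (1/(5*σ^2)) μ (by positivity)).const_mul K
  have h_bound : ∀ᵐ x : ℝ, ∀ s ∈ Metric.ball σ (σ/2),
      ‖g x * (((x - μ)^2/s^3 - 1/s) * gauss μ s x)‖ ≤
        K * ((1+|x|)^(n+2) * Real.exp (-(1/(5*σ^2)) * (x-μ)^2)) := by
    refine ae_of_all _ fun x s hs => ?_
    have hs1 : |s - σ| < σ/2 := by simpa [Real.dist_eq] using hs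
    obtain ⟨hsl, hsr⟩ := abs_lt.mp hs1
    have hs0 : σ/2 < s := by linarith
    have hspos : 0 < s := by linarith
    have hM1 : (1:ℝ) ≤ (1+|μ|)^2 * (1+|x|)^2 := by
      have h1 : (1:ℝ) ≤ (1+|μ|)^2 := one_le_pow₀ (by simp [abs_nonneg])
      have h2 : (1:ℝ) ≤ (1+|x|)^2 := one_le_pow₀ (by simp [abs_nonneg])
      nlinarith
    have hxu : (x-μ)^2 ≤ (1+|μ|)^2 * (1+|x|)^2 := by
      have h4 : |x - μ| ≤ |x| + |μ| := abs_sub x μ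
      have h6 : |x - μ| ≤ (1+|μ|)*(1+|x|) := by nlinarith [abs_nonneg x, abs_nonneg μ]
      calc (x-μ)^2 = |x-μ|^2 := (sq_abs _).symm
        _ ≤ ((1+|μ|)*(1+|x|))^2 := pow_le_pow_left₀ (abs_nonneg _) h6 2
        _ = (1+|μ|)^2 * (1+|x|)^2 := mul_pow _ _ 2
    -- middle factor bound
    have hmid : |(x - μ)^2/s^3 - 1/s| ≤ (8/σ^3 + 2/σ) * ((1+|μ|)^2*(1+|x|)^2) := by
      have h1 : |(x - μ)^2/s^3 - 1/s| ≤ (x-μ)^2/s^3 + 1/s := by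
        refine (abs_sub _ _).trans ?_
        rw [abs_of_nonneg (by positivity), abs_of_nonneg (by positivity)]
      have h2 : (x-μ)^2/s^3 ≤ (x-μ)^2/(σ^3/8) := by
        apply div_le_div_of_nonneg_left (sq_nonneg _) (by positivity)
        calc σ^3/8 = (σ/2)^3 := by ring
          _ ≤ s^3 := pow_le_pow_left₀ (by positivity) hs0.le 3
      have h2' : (x-μ)^2/(σ^3/8) = 8/σ^3 * (x-μ)^2 := by ring
      have h3 : 1/s ≤ 2/σ := by
        rw [div_le_div_iff₀ hspos hσ]
        linarith
      have h4 : 8/σ^3 * (x-μ)^2 ≤ 8/σ^3 * ((1+|μ|)^2*(1+|x|)^2) :=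
        mul_le_mul_of_nonneg_left hxu (by positivity)
      have h5 : 2/σ ≤ 2/σ * ((1+|μ|)^2*(1+|x|)^2) :=
        le_mul_of_one_le_right (by positivity) hM1
      calc |(x - μ)^2/s^3 - 1/s| ≤ (x-μ)^2/s^3 + 1/s := h1
        _ ≤ 8/σ^3 * ((1+|μ|)^2*(1+|x|)^2) + 2/σ * ((1+|μ|)^2*(1+|x|)^2) := by
            rw [h2'] at h2; linarith
        _ = (8/σ^3 + 2/σ) * ((1+|μ|)^2*(1+|x|)^2) := by ring
    have hgauss : gauss μ s x ≤
        Real.exp (-(1/(5*σ^2)) * (x-μ)^2) * (2/(Real.sqrt (2*Real.pi)*σ)) := by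
      unfold gauss
      have hexp : Real.exp (-(x-μ)^2/(2*s^2)) ≤ Real.exp (-(1/(5*σ^2)) * (x-μ)^2) := by
        apply Real.exp_le_exp.mpr
        rw [← sub_nonneg]
        have e : -(1/(5*σ^2)) * (x-μ)^2 - (-(x-μ)^2/(2*s^2))
            = (x-μ)^2 * (5*σ^2 - 2*s^2) / (10*σ^2*s^2) := by
          field_simp; ring
        rw [e]
        apply div_nonneg _ (by positivity)
        apply mul_nonneg (sq_nonneg _)
        nlinarith
      have hden : 1/(Real.sqrt (2*Real.pi)*s) ≤ 2/(Real.sqrt (2*Real.pi)*σ) := by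
        rw [div_le_div_iff₀ (by positivity) (by positivity)]
        have := sqrt2pi_pos
        nlinarith
      calc Real.exp (-(x-μ)^2/(2*s^2)) / (Real.sqrt (2*Real.pi)*s)
          = Real.exp (-(x-μ)^2/(2*s^2)) * (1/(Real.sqrt (2*Real.pi)*s)) := by ring
        _ ≤ Real.exp (-(1/(5*σ^2)) * (x-μ)^2) * (2/(Real.sqrt (2*Real.pi)*σ)) :=
            mul_le_mul hexp hden (by positivity) (Real.exp_pos _).le
    rw [Real.norm_eq_abs, abs_mul, abs_mul, abs_of_nonneg (gauss_nonneg hspos)]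
    calc |g x| * (|(x - μ)^2/s^3 - 1/s| * gauss μ s x)
        ≤ (C*(1+|x|)^n) * (((8/σ^3 + 2/σ) * ((1+|μ|)^2*(1+|x|)^2)) *
            (Real.exp (-(1/(5*σ^2)) * (x-μ)^2) * (2/(Real.sqrt (2*Real.pi)*σ)))) := by
          apply mul_le_mul (hb x) ?_ (mul_nonneg (abs_nonneg _) (gauss_nonneg hspos))
            (mul_nonneg hC (by positivity))
          apply mul_le_mul hmid hgauss (gauss_nonneg hspos) ?_
          have := sqrt2pi_pos
          positivity
      _ = K * ((1+|x|)^(n+2) * Real.exp (-(1/(5*σ^2)) * (x-μ)^2)) := by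
          rw [hK]; ring
  have h_diff : ∀ᵐ x : ℝ, ∀ s ∈ Metric.ball σ (σ/2),
      HasDerivAt (fun s => g x * gauss μ s x) (g x * (((x - μ)^2/s^3 - 1/s) * gauss μ s x)) s := by
    refine ae_of_all _ fun x s hs => ?_
    have hs1 : |s - σ| < σ/2 := by simpa [Real.dist_eq] using hs
    obtain ⟨hsl, hsr⟩ := abs_lt.mp hs1
    have hspos : 0 < s := by linarith
    exact (hasDerivAt_gauss_sigma μ x s hspos.ne').const_mul (g x)
  exact hasDerivAt_integral_of_dominated_loc_of_deriv_le (Metric.ball_mem_nhds σ (by positivity : (0:ℝ) < σ/2))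
    hF_meas hF_int hF'_meas h_bound hbound_int h_diff

theorem stmt9 (f : ℝ → ℝ) (hf : Continuous f) (hg : PolyGrowth f)
    (μ₀ σ₀ : ℝ) (hσ₀ : 0 < σ₀)
    (a b c : ℝ) (q : ℝ → ℝ) (hq : q = fun x => a + b * x + c * x^2)
    (hopt : ∀ p : Polynomial ℝ, p.natDegree ≤ 2 →
      ∫ x : ℝ, p.eval x * (q x - f x) * gauss μ₀ σ₀ x = 0) :
    deriv (fun m => relaxF f m σ₀) μ₀ = deriv (fun m => relaxF q m σ₀) μ₀ ∧
    deriv (fun s => relaxF f μ₀ s) σ₀ = deriv (fun s => relaxF q μ₀ s) σ₀ := by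
  have hqc : Continuous q := by rw [hq]; fun_prop
  obtain ⟨Cf, nf, hCf, hbf⟩ := polyGrowth_bound f hf hg
  have hbq : ∀ x, |q x| ≤ (|a|+|b|+|c|+1) * (1+|x|)^2 := by
    intro x; rw [hq]; exact quad_bound a b c x
  constructor
  · obtain ⟨hIf, hDf⟩ := deriv_mu f hf Cf nf hbf μ₀ σ₀ hσ₀
    obtain ⟨hIq, hDq⟩ := deriv_mu q hqc _ 2 hbq μ₀ σ₀ hσ₀
    have e1 : deriv (fun m => relaxF f m σ₀) μ₀
        = ∫ x : ℝ, f x * (((x - μ₀)/σ₀^2) * gauss μ₀ σ₀ x) := by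
      simp only [relaxF]; exact hDf.deriv
    have e2 : deriv (fun m => relaxF q m σ₀) μ₀
        = ∫ x : ℝ, q x * (((x - μ₀)/σ₀^2) * gauss μ₀ σ₀ x) := by
      simp only [relaxF]; exact hDq.deriv
    rw [e1, e2, ← sub_eq_zero, ← integral_sub hIf hIq]
    set P : Polynomial ℝ := Polynomial.C ((σ₀^2)⁻¹) * (Polynomial.X - Polynomial.C μ₀) with hP
    have hPdeg : P.natDegree ≤ 2 := by rw [hP]; compute_degree!
    have hPeval : ∀ x, P.eval x = (σ₀^2)⁻¹ * (x - μ₀) := by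
      intro x; simp [hP]
    have hptw : ∀ x : ℝ, f x * (((x - μ₀)/σ₀^2) * gauss μ₀ σ₀ x)
        - q x * (((x - μ₀)/σ₀^2) * gauss μ₀ σ₀ x)
        = -(P.eval x * (q x - f x) * gauss μ₀ σ₀ x) := by
      intro x; rw [hPeval]; ring
    simp only [hptw]
    rw [integral_neg, hopt P hPdeg, neg_zero]
  · obtain ⟨hIf, hDf⟩ := deriv_sigma f hf Cf nf hbf μ₀ σ₀ hσ₀
    obtain ⟨hIq, hDq⟩ := deriv_sigma q hqc _ 2 hbq μ₀ σ₀ hσ₀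
    have e1 : deriv (fun s => relaxF f μ₀ s) σ₀
        = ∫ x : ℝ, f x * (((x - μ₀)^2/σ₀^3 - 1/σ₀) * gauss μ₀ σ₀ x) := by
      simp only [relaxF]; exact hDf.deriv
    have e2 : deriv (fun s => relaxF q μ₀ s) σ₀
        = ∫ x : ℝ, q x * (((x - μ₀)^2/σ₀^3 - 1/σ₀) * gauss μ₀ σ₀ x) := by
      simp only [relaxF]; exact hDq.deriv
    rw [e1, e2, ← sub_eq_zero, ← integral_sub hIf hIq]
    set P : Polynomial ℝ := Polynomial.C ((σ₀^3)⁻¹) * (Polynomial.X - Polynomial.C μ₀)^2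
      - Polynomial.C (σ₀⁻¹) with hP
    have hPdeg : P.natDegree ≤ 2 := by rw [hP]; compute_degree!
    have hPeval : ∀ x, P.eval x = (σ₀^3)⁻¹ * (x - μ₀)^2 - σ₀⁻¹ := by
      intro x; simp [hP]
    have hptw : ∀ x : ℝ, f x * (((x - μ₀)^2/σ₀^3 - 1/σ₀) * gauss μ₀ σ₀ x)
        - q x * (((x - μ₀)^2/σ₀^3 - 1/σ₀) * gauss μ₀ σ₀ x)
        = -(P.eval x * (q x - f x) * gauss μ₀ σ₀ x) := by
      intro x; rw [hPeval]; ring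
    simp only [hptw]
    rw [integral_neg, hopt P hPdeg, neg_zero]
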